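/- Call an n×n matrix T over a commutative ring lower-unipotent if T is lower triangular with all diagonal entries equal to 1. Let P_k(a) be the identity matrix modified so that its 2×2 submatrix in rows and columns k, k+1 is [[0,1],[1,a]]. If T is lower-unipotent, then the matrix T' = P_k(a + T_{k+1,k})⁻¹ · T · P_k(a) is again lower-unipotent. -/
import Mathlib


/-- The `n×n` path matrix `P_k(a)`: the identity matrix with the `2×2` submatrix in
rows and columns `k, k+1` replaced by `[[0,1],[1,a]]`.  Here `k` and `k'` stand for
the indices `k` and `k+1`. -/
def pathMat {R : Type*} [CommRing R] {n : ℕ} (k k' : Fin n) (a : R) :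
    Matrix (Fin n) (Fin n) R := fun i j =>
  if i = k then (if j = k' then 1 else 0)
  else if i = k' then (if j = k then 1 else if j = k' then a else 0)
  else (if i = j then 1 else 0)

/-- A square matrix is lower-unipotent if it is lower triangular with all diagonal
entries equal to `1`. -/
def LowerUnipotent {R : Type*} [CommRing R] {n : ℕ} (T : Matrix (Fin n) (Fin n) R) : Prop :=
  (∀ i j : Fin n, i < j → T i j = 0) ∧ (∀ i : Fin n, T i i = 1)

def qMat {R : Type*} [CommRing R] {n : ℕ} (k k' : Fin n) (b : R) :
    Matrix (Fin n) (Fin n) R := fun i j =>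
  if i = k then (if j = k then -b else if j = k' then 1 else 0)
  else if i = k' then (if j = k then 1 else 0)
  else (if i = j then 1 else 0)

lemma mul_pathMat {R : Type*} [CommRing R] {n : ℕ} {k k' : Fin n} (h : k ≠ k') (a : R)
    (M : Matrix (Fin n) (Fin n) R) (i j : Fin n) :
    (M * pathMat k k' a) i j =
      if j = k then M i k' else if j = k' then M i k + a * M i k' else M i j := by
  rw [Matrix.mul_apply]
  by_cases hj : j = k
  · rw [hj, if_pos rfl, Finset.sum_eq_single k']
    · simp [pathMat, h, h.symm, Ne.symm h]
    · intro p _ hp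
      simp only [pathMat]
      split_ifs <;> simp_all
    · simp
  · by_cases hj' : j = k'
    · rw [hj', if_neg (by simpa [hj'] using hj), if_pos rfl]
      rw [show (Finset.univ : Finset (Fin n)) = insert k (Finset.univ.erase k) by
        simp, Finset.sum_insert (by simp)]
      rw [Finset.sum_eq_single_of_mem k' (by simp [h.symm])]
      · simp [pathMat, h, h.symm]; ring
      · intro p hp hpk'
        simp only [Finset.mem_erase] at hp
        simp only [pathMat]
        split_ifs <;> simp_all
    · rw [if_neg hj, if_neg hj', Finset.sum_eq_single j]
      · simp [pathMat, hj, hj']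
      · intro p _ hp
        simp only [pathMat]
        split_ifs <;> simp_all
      · simp

lemma qMat_mul {R : Type*} [CommRing R] {n : ℕ} {k k' : Fin n} (h : k ≠ k') (b : R)
    (M : Matrix (Fin n) (Fin n) R) (i j : Fin n) :
    (qMat k k' b * M) i j =
      if i = k then -b * M k j + M k' j else if i = k' then M k j else M i j := by
  rw [Matrix.mul_apply]
  by_cases hi : i = k
  · rw [hi, if_pos rfl]
    rw [show (Finset.univ : Finset (Fin n)) = insert k (Finset.univ.erase k) by
      simp, Finset.sum_insert (by simp)]
    rw [Finset.sum_eq_single_of_mem k' (by simp [h.symm])]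
    · simp [qMat, h, h.symm]
    · intro p hp hpk'
      simp only [Finset.mem_erase] at hp
      simp only [qMat]
      split_ifs <;> simp_all
  · by_cases hi' : i = k'
    · rw [hi', if_neg (by simpa [hi'] using hi), if_pos rfl, Finset.sum_eq_single k]
      · simp [qMat, h.symm, h]
      · intro p _ hp
        simp only [qMat]
        split_ifs <;> simp_all
      · simp
    · rw [if_neg hi, if_neg hi', Finset.sum_eq_single i]
      · simp [qMat, hi, hi']
      · intro p _ hp
        simp only [qMat]
        split_ifs <;> simp_all
      · simp

lemma pathMat_mul {R : Type*} [CommRing R] {n : ℕ} {k k' : Fin n} (h : k ≠ k') (a : R)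
    (M : Matrix (Fin n) (Fin n) R) (i j : Fin n) :
    (pathMat k k' a * M) i j =
      if i = k then M k' j else if i = k' then M k j + a * M k' j else M i j := by
  rw [Matrix.mul_apply]
  by_cases hi : i = k
  · rw [hi, if_pos rfl, Finset.sum_eq_single k']
    · simp [pathMat, h, h.symm]
    · intro p _ hp
      simp only [pathMat]
      split_ifs <;> simp_all
    · simp
  · by_cases hi' : i = k'
    · rw [hi', if_neg (by simpa [hi'] using hi), if_pos rfl]
      rw [show (Finset.univ : Finset (Fin n)) = insert k (Finset.univ.erase k) by
        simp, Finset.sum_insert (by simp)]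
      rw [Finset.sum_eq_single_of_mem k' (by simp [h.symm])]
      · simp [pathMat, h, h.symm]
      · intro p hp hpk'
        simp only [Finset.mem_erase] at hp
        simp only [pathMat]
        split_ifs <;> simp_all
    · rw [if_neg hi, if_neg hi', Finset.sum_eq_single i]
      · simp [pathMat, hi, hi']
      · intro p _ hp
        simp only [pathMat]
        split_ifs <;> simp_all
      · simp

lemma pathMat_inv {R : Type*} [CommRing R] {n : ℕ} {k k' : Fin n} (h : k ≠ k') (b : R) :
    (pathMat k k' b)⁻¹ = qMat k k' b := by
  apply Matrix.inv_eq_right_inv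
  ext i j
  rw [pathMat_mul h]
  simp only [qMat, Matrix.one_apply]
  split_ifs <;> simp_all

/-- If `T` is lower-unipotent, then `P_k(a + T_{k+1,k})⁻¹ · T · P_k(a)` is again
lower-unipotent. -/
theorem lowerUnipotent_conjugate {R : Type*} [CommRing R] {n : ℕ} (k : ℕ)
    (hk : k + 1 < n) (a : R) (T : Matrix (Fin n) (Fin n) R) (hT : LowerUnipotent T) :
    LowerUnipotent
      ((pathMat (⟨k, by omega⟩ : Fin n) ⟨k + 1, hk⟩ (a + T ⟨k + 1, hk⟩ ⟨k, by omega⟩))⁻¹ *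
        T * pathMat (⟨k, by omega⟩ : Fin n) ⟨k + 1, hk⟩ a) := by
  obtain ⟨hlt, hdiag⟩ := hT
  set k0 : Fin n := ⟨k, by omega⟩ with hk0
  set k1 : Fin n := ⟨k + 1, hk⟩ with hk1
  have v0 : (k0 : ℕ) = k := by rw [hk0]
  have v1 : (k1 : ℕ) = k + 1 := by rw [hk1]
  have hne : k0 ≠ k1 := by
    intro hcon
    rw [Fin.ext_iff, v0, v1] at hcon
    omega
  have h01 : k0 < k1 := by rw [Fin.lt_def, v0, v1]; omega
  set b : R := a + T k1 k0 with hb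
  have e1 : T k0 k1 = 0 := hlt _ _ h01
  have e2 : T k0 k0 = 1 := hdiag _
  have e3 : T k1 k1 = 1 := hdiag _
  rw [pathMat_inv hne]
  constructor
  · intro i j hij
    rw [mul_pathMat hne]
    split_ifs with hj0 hj1
    · rw [qMat_mul hne]
      split_ifs with hi0 hi1
      · exact absurd hij (by rw [hi0, hj0]; exact lt_irrefl _)
      · exact absurd hij (by rw [hi1, hj0]; exact not_lt.2 h01.le)
      · exact hlt _ _ ((hj0 ▸ hij).trans h01)
    · rw [qMat_mul hne, qMat_mul hne]
      split_ifs with hi0 hi1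
      · rw [e1, e2, e3, hb]; ring
      · exact absurd hij (by rw [hi1, hj1]; exact lt_irrefl _)
      · have h1 : i < k0 := by
          rw [hj1] at hij
          rw [Fin.lt_def, v1] at hij
          rw [Fin.lt_def, v0]
          have : (i : ℕ) ≠ k + 1 := fun hcon => hi1 (Fin.ext (by rw [v1]; exact hcon))
          have : (i : ℕ) ≠ k := fun hcon => hi0 (Fin.ext (by rw [v0]; exact hcon))
          omega
        rw [hlt _ _ h1, hlt _ _ (h1.trans h01)]; ring
    · rw [qMat_mul hne]
      have h2 : (j : ℕ) ≠ k := fun hcon => hj0 (Fin.ext (by rw [v0]; exact hcon))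
      have h3 : (j : ℕ) ≠ k + 1 := fun hcon => hj1 (Fin.ext (by rw [v1]; exact hcon))
      split_ifs with hi0 hi1
      · have hj1' : k1 < j := by
          rw [hi0, Fin.lt_def, v0] at hij
          rw [Fin.lt_def, v1]
          omega
        rw [hlt _ _ (h01.trans hj1'), hlt _ _ hj1']; ring
      · have hj1' : k1 < j := hi1 ▸ hij
        exact hlt _ _ (h01.trans hj1')
      · exact hlt _ _ hij
  · intro i
    rw [mul_pathMat hne]
    split_ifs with hi0 hi1
    · rw [qMat_mul hne, if_pos hi0, e1, e3]; ring
    · rw [qMat_mul hne, qMat_mul hne, if_neg hi0, if_pos hi1, if_neg hi0, if_pos hi1,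
        e1, e2]; ring
    · rw [qMat_mul hne, if_neg hi0, if_neg hi1]
      exact hdiag i
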